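/- There exist ν₀ > 0 and a function β : ℝ → ℂ such that for every ν ≥ ν₀, (β(ν)² + ν² + 1 + β(ν)) · (β(ν)² + ν² + 2 + 4β(ν)) − 4β(ν)² = 0, and β(ν) = i(ν + 3/(5ν)) − 2/(125ν²) + o(ν⁻²) as ν → +∞; that is, ν² · (β(ν) − i(ν + 3/(5ν)) + 2/(125ν²)) → 0 as ν → +∞. -/

import Mathlib

set_option maxHeartbeats 1000000
noncomputable section
open Complex Filter Polynomial

lemma exists_four_roots (a b c d : ℂ) :
    ∃ r0 r1 r2 r3 : ℂ, ∀ z : ℂ,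
      z^4 + a*z^3 + b*z^2 + c*z + d = (z - r0)*(z - r1)*(z - r2)*(z - r3) := by
  have hm : (X^4 + C a * X^3 + C b * X^2 + C c * X + C d : ℂ[X]).Monic := by
    monicity!
  have hdeg : (X^4 + C a * X^3 + C b * X^2 + C c * X + C d : ℂ[X]).natDegree = 4 := by
    compute_degree!
  have hsplits : Splits (X^4 + C a * X^3 + C b * X^2 + C c * X + C d : ℂ[X]) :=
    IsAlgClosed.splits _
  have hcard : (X^4 + C a * X^3 + C b * X^2 + C c * X + C d : ℂ[X]).roots.card = 4 := by
    rw [splits_iff_card_roots.mp hsplits, hdeg]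
  have heq := hsplits.eq_prod_roots_of_monic hm
  have hlist : (X^4 + C a * X^3 + C b * X^2 + C c * X + C d : ℂ[X]).roots.toList.length = 4 := by
    rw [Multiset.length_toList, hcard]
  obtain ⟨r0, r1, r2, r3, hl⟩ : ∃ r0 r1 r2 r3,
      (X^4 + C a * X^3 + C b * X^2 + C c * X + C d : ℂ[X]).roots.toList = [r0, r1, r2, r3] := by
    rcases e : (X^4 + C a * X^3 + C b * X^2 + C c * X + C d : ℂ[X]).roots.toList with
      _ | ⟨x0, _ | ⟨x1, _ | ⟨x2, _ | ⟨x3, _ | ⟨x4, l⟩⟩⟩⟩⟩ <;>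
      rw [e] at hlist <;> simp only [List.length] at hlist <;> first
        | omega
        | exact ⟨x0, x1, x2, x3, rfl⟩
  have hroots : (X^4 + C a * X^3 + C b * X^2 + C c * X + C d : ℂ[X]).roots
      = ({r0, r1, r2, r3} : Multiset ℂ) := by
    rw [← Multiset.coe_toList (X^4 + C a * X^3 + C b * X^2 + C c * X + C d : ℂ[X]).roots, hl]
    rfl
  refine ⟨r0, r1, r2, r3, fun z => ?_⟩
  have h2 : (X^4 + C a * X^3 + C b * X^2 + C c * X + C d : ℂ[X]).eval z
      = (z - r0)*(z - r1)*(z - r2)*(z - r3) := by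
    conv_lhs => rw [heq]
    rw [hroots]
    simp only [Multiset.insert_eq_cons, Multiset.map_cons, Multiset.map_singleton,
      Multiset.prod_cons, Multiset.prod_singleton, eval_mul, eval_sub, eval_X, eval_C]
    ring
  have h1 : (X^4 + C a * X^3 + C b * X^2 + C c * X + C d : ℂ[X]).eval z
      = z^4 + a*z^3 + b*z^2 + c*z + d := by simp
  rw [← h1, h2]


lemma vieta (a b c d r0 r1 r2 r3 : ℂ)
    (h : ∀ z : ℂ, z^4 + a*z^3 + b*z^2 + c*z + d = (z - r0)*(z - r1)*(z - r2)*(z - r3)) :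
    a = -(r0+r1+r2+r3) ∧ b = (r0*r1+r0*r2+r0*r3+r1*r2+r1*r3+r2*r3)
      ∧ c = -(r0*r1*r2+r0*r1*r3+r0*r2*r3+r1*r2*r3) ∧ d = r0*r1*r2*r3 := by
  refine ⟨?_, ?_, ?_, ?_⟩
  · linear_combination (-1/6 : ℂ) * h 1 + (1/6 : ℂ) * h (-1) + (1/12 : ℂ) * h 2
      + (-1/12 : ℂ) * h (-2)
  · linear_combination (-5/4 : ℂ) * h 0 + (2/3 : ℂ) * h 1 + (2/3 : ℂ) * h (-1)
      + (-1/24 : ℂ) * h 2 + (-1/24 : ℂ) * h (-2)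
  · linear_combination (2/3 : ℂ) * h 1 + (-2/3 : ℂ) * h (-1) + (-1/12 : ℂ) * h 2
      + (1/12 : ℂ) * h (-2)
  · linear_combination h 0

lemma sum_triples (a b c d r0 r1 r2 r3 : ℂ)
    (h : ∀ z : ℂ, z^4 + a*z^3 + b*z^2 + c*z + d = (z - r0)*(z - r1)*(z - r2)*(z - r3)) :
    ∀ z : ℂ, 4*z^3 + 3*a*z^2 + 2*b*z + c =
      (z - r1)*(z - r2)*(z - r3) + (z - r0)*(z - r2)*(z - r3)
      + (z - r0)*(z - r1)*(z - r3) + (z - r0)*(z - r1)*(z - r2) := by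
  obtain ⟨ha, hb, hc, -⟩ := vieta a b c d r0 r1 r2 r3 h
  intro z
  linear_combination (3*z^2) * ha + (2*z) * hb + hc

lemma sum_pairs (a b c d r0 r1 r2 r3 : ℂ)
    (h : ∀ z : ℂ, z^4 + a*z^3 + b*z^2 + c*z + d = (z - r0)*(z - r1)*(z - r2)*(z - r3)) :
    ∀ z : ℂ, 6*z^2 + 3*a*z + b =
      (z - r0)*(z - r1) + (z - r0)*(z - r2) + (z - r0)*(z - r3)
      + (z - r1)*(z - r2) + (z - r1)*(z - r3) + (z - r2)*(z - r3) := by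
  obtain ⟨ha, hb, -, -⟩ := vieta a b c d r0 r1 r2 r3 h
  intro z
  linear_combination (3*z) * ha + hb


lemma prod3_le {a b c a' b' c' : ℝ} (ha : 0 ≤ a) (hb : 0 ≤ b) (hc : 0 ≤ c)
    (h1 : a ≤ a') (h2 : b ≤ b') (h3 : c ≤ c') : a*b*c ≤ a'*b'*c' :=
  mul_le_mul (mul_le_mul h1 h2 hb (ha.trans h1)) h3 hc
    (mul_nonneg (ha.trans h1) (hb.trans h2))

lemma prod2_le {a b a' b' : ℝ} (ha : 0 ≤ a) (hb : 0 ≤ b)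
    (h1 : a ≤ a') (h2 : b ≤ b') : a*b ≤ a'*b' :=
  mul_le_mul h1 h2 hb (ha.trans h1)

lemma pure_bound (ν δ0 δ1 δ2 δ3 E : ℝ) (hν : 100 ≤ ν)
    (h0 : 0 ≤ δ0) (h1 : 0 ≤ δ1) (h2 : 0 ≤ δ2) (h3 : 0 ≤ δ3)
    (hub1 : δ1 ≤ 2*ν+15) (hub2 : δ2 ≤ 2*ν+15) (hub3 : δ3 ≤ 2*ν+15)
    (hm1 : δ0 ≤ δ1) (hm2 : δ0 ≤ δ2) (hm3 : δ0 ≤ δ3)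
    (hE : δ0*δ1*δ2*δ3 = E) (hE16 : E ≤ 1/16)
    (hA : (19/2)*ν^2 ≤ δ1*δ2*δ3 + δ0*δ2*δ3 + δ0*δ1*δ3 + δ0*δ1*δ2)
    (hB : (7/2)*ν^2 ≤ δ0*δ1 + δ0*δ2 + δ0*δ3 + δ1*δ2 + δ1*δ3 + δ2*δ3) :
    ν^2 * δ0 ≤ 32*E := by
  have hδ0 : δ0 ≤ 1/2 := by
    by_contra hcon
    push_neg at hcon
    have s2 : δ0*δ0 ≤ δ0*δ1 := mul_le_mul_of_nonneg_left hm1 h0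
    have s3 : δ0*δ0*δ0 ≤ δ0*δ1*δ2 := mul_le_mul s2 hm2 h0 (mul_nonneg h0 h1)
    have hp : δ0*δ0*δ0*δ0 ≤ δ0*δ1*δ2*δ3 :=
      mul_le_mul s3 hm3 h0 (mul_nonneg (mul_nonneg h0 h1) h2)
    have q1 : (1/2:ℝ)*(1/2) < δ0*δ0 := by nlinarith
    have q2 : (1/16:ℝ) < δ0*δ0*(δ0*δ0) := by nlinarith [q1]
    nlinarith [hp, hE, hE16, q2]
  have hd0ub : δ0 ≤ 2*ν+15 := hm1.trans hub1
  -- no second root close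
  have hgt : ∀ x y z : ℝ, 0 ≤ x → 0 ≤ y → 0 ≤ z → x ≤ 2*ν+15 → y ≤ 2*ν+15 →
      z ≤ 2*ν+15 →
      x*y*z + δ0*y*z + δ0*x*z + δ0*x*y ≥ (19/2)*ν^2 → ¬ x ≤ 1/2 := by
    intro x y z hx hy hz hxu hyu hzu hsum hcon
    have b1 := prod3_le hx hy hz hcon hyu hzu
    have b2 := prod3_le h0 hy hz hδ0 hyu hzu
    have b3 := prod3_le h0 hx hz hδ0 hxu hzu
    have b4 := prod3_le h0 hx hy hδ0 hxu hyu
    nlinarith [hsum, b1, b2, b3, b4, hν, sq_nonneg (ν-100)]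
  have hgt1 : 1/2 < δ1 := by
    by_contra hcon; push_neg at hcon
    exact hgt δ1 δ2 δ3 h1 h2 h3 hub1 hub2 hub3 (by nlinarith [hA]) hcon
  have hgt2 : 1/2 < δ2 := by
    by_contra hcon; push_neg at hcon
    exact hgt δ2 δ1 δ3 h2 h1 h3 hub2 hub1 hub3 (by nlinarith [hA]) hcon
  have hgt3 : 1/2 < δ3 := by
    by_contra hcon; push_neg at hcon
    exact hgt δ3 δ1 δ2 h3 h1 h2 hub3 hub1 hub2 (by nlinarith [hA]) hcon
  -- at most one of δ1 δ2 δ3 below ν/4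
  have htwo : ∀ x y : ℝ, 0 ≤ x → 0 ≤ y → ¬ (x < ν/4 ∧ y < ν/4 ∧
      δ0*x + δ0*y + δ0*(2*ν+15) + x*y + x*(2*ν+15) + y*(2*ν+15) ≥
        δ0*δ1 + δ0*δ2 + δ0*δ3 + δ1*δ2 + δ1*δ3 + δ2*δ3) := by
    intro x y hx hy ⟨hxs, hys, hge⟩
    have hd0s : δ0 < ν/4 := by nlinarith
    nlinarith [prod2_le h0 hx (le_of_lt hd0s) (le_of_lt hxs),
      prod2_le h0 hy (le_of_lt hd0s) (le_of_lt hys),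
      prod2_le h0 (by positivity : (0:ℝ) ≤ 2*ν+15) (le_of_lt hd0s) (le_refl _),
      prod2_le hx hy (le_of_lt hxs) (le_of_lt hys),
      prod2_le hx (by positivity : (0:ℝ) ≤ 2*ν+15) (le_of_lt hxs) (le_refl _),
      prod2_le hy (by positivity : (0:ℝ) ≤ 2*ν+15) (le_of_lt hys) (le_refl _), hB]
  have hlow : ν^2/32 ≤ δ1*δ2*δ3 := by
    by_cases c1 : δ1 < ν/4 <;> by_cases c2 : δ2 < ν/4 <;> by_cases c3 : δ3 < ν/4
    · exact absurd ⟨c1, c2, by nlinarith [prod2_le h1 h2 (le_of_lt c1) (le_of_lt c2)]⟩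
        (htwo δ1 δ2 h1 h2)
    · exact absurd ⟨c1, c2, by nlinarith⟩ (htwo δ1 δ2 h1 h2)
    · exact absurd ⟨c1, c3, by nlinarith⟩ (htwo δ1 δ3 h1 h3)
    · -- δ1 < ν/4, δ2 ≥ ν/4, δ3 ≥ ν/4
      push_neg at c2 c3
      have := prod3_le (by norm_num : (0:ℝ) ≤ 1/2) (by positivity : (0:ℝ) ≤ ν/4)
        (by positivity : (0:ℝ) ≤ ν/4) (le_of_lt hgt1) c2 c3
      nlinarith [this]
    · exact absurd ⟨c2, c3, by nlinarith⟩ (htwo δ2 δ3 h2 h3)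
    · push_neg at c1 c3
      have := prod3_le (by positivity : (0:ℝ) ≤ ν/4) (by norm_num : (0:ℝ) ≤ 1/2)
        (by positivity : (0:ℝ) ≤ ν/4) c1 (le_of_lt hgt2) c3
      nlinarith [this]
    · push_neg at c1 c2
      have := prod3_le (by positivity : (0:ℝ) ≤ ν/4) (by positivity : (0:ℝ) ≤ ν/4)
        (by norm_num : (0:ℝ) ≤ 1/2) c1 c2 (le_of_lt hgt3)
      nlinarith [this]
    · push_neg at c1 c2 c3
      have := prod3_le (by positivity : (0:ℝ) ≤ ν/4) (by positivity : (0:ℝ) ≤ ν/4)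
        (by positivity : (0:ℝ) ≤ ν/4) c1 c2 c3
      nlinarith [this]
  have := mul_le_mul_of_nonneg_left hlow h0
  nlinarith [this, hE]

lemma root_bound (ν : ℝ) (hν : 1 ≤ ν) (r : ℂ)
    (hr : (r^2 + (ν:ℂ)^2 + 1 + r) * (r^2 + (ν:ℂ)^2 + 2 + 4*r) - 4*r^2 = 0) :
    ‖r‖ ≤ ν + 13 := by
  set p : ℂ := r^2 + (ν:ℂ)^2 with hp
  have key : p^2 = -((3+5*r)*p + (2+6*r)) := by
    linear_combination hr
  have h1 : ‖p‖^2 ≤ (3+5*‖r‖)*‖p‖ + (2+6*‖r‖) := by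
    calc ‖p‖^2 = ‖p^2‖ := by rw [norm_pow]
    _ = ‖(3+5*r)*p + (2+6*r)‖ := by rw [key, norm_neg]
    _ ≤ ‖(3+5*r)*p‖ + ‖2+6*r‖ := norm_add_le _ _
    _ = ‖(3+5*r)‖*‖p‖ + ‖2+6*r‖ := by rw [norm_mul]
    _ ≤ (3+5*‖r‖)*‖p‖ + (2+6*‖r‖) := by
        have e1 : ‖(3:ℂ)+5*r‖ ≤ 3+5*‖r‖ := by
          calc ‖(3:ℂ)+5*r‖ ≤ ‖(3:ℂ)‖ + ‖5*r‖ := norm_add_le _ _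
          _ = 3 + 5*‖r‖ := by simp [norm_mul]
        have e2 : ‖(2:ℂ)+6*r‖ ≤ 2+6*‖r‖ := by
          calc ‖(2:ℂ)+6*r‖ ≤ ‖(2:ℂ)‖ + ‖6*r‖ := norm_add_le _ _
          _ = 2 + 6*‖r‖ := by simp [norm_mul]
        have hpn : (0:ℝ) ≤ ‖p‖ := norm_nonneg _
        nlinarith [e1, e2]
  have hx : ‖p‖ ≤ 6 + 11*‖r‖ := by
    nlinarith [norm_nonneg p, norm_nonneg r, h1]
  have hR2 : ‖r‖^2 ≤ ν^2 + ‖p‖ := by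
    have : r^2 = p - (ν:ℂ)^2 := by rw [hp]; ring
    calc ‖r‖^2 = ‖r^2‖ := by rw [norm_pow]
    _ = ‖p - (ν:ℂ)^2‖ := by rw [this]
    _ ≤ ‖p‖ + ‖(ν:ℂ)^2‖ := norm_sub_le _ _
    _ = ‖p‖ + ν^2 := by
        rw [norm_pow]
        norm_num [Complex.norm_real]
    _ = ν^2 + ‖p‖ := by ring
  nlinarith [norm_nonneg r, hx, hR2]


noncomputable def tt (ν : ℝ) : ℂ := Complex.I*((ν:ℂ) + 3/(5*(ν:ℂ))) - 2/(125*(ν:ℂ)^2)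

noncomputable def Qf (z : ℂ) (ν : ℝ) : ℂ :=
  (z^2 + (ν:ℂ)^2 + 1 + z) * (z^2 + (ν:ℂ)^2 + 2 + 4*z) - 4*z^2

lemma gen1 (x y t : ℂ) (h : x*y = 1)
    (ht : t = I*(x + (3/5)*y) - (2/125)*y^2) :
    (t^2 + x^2 + 1 + t) * (t^2 + x^2 + 2 + 4*t) - 4*t^2
    = (-1137/625)*I*y + (-391/15625)*y^2 + (-3327/3125)*I*y^3
      + (16791/78125)*y^4 + (31468/1953125)*I*y^5 + (-224/390625)*y^6
      + (-96/9765625)*I*y^7 + (16/244140625)*y^8 := by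
  have hI : (I:ℂ)^2 = -1 := Complex.I_sq
  subst ht
  linear_combination ((-2 : ℂ) + (17984/15625 : ℂ)*y^2 + (-144/78125 : ℂ)*y^4 + (8/5 : ℂ)*x*y + (-16/15625 : ℂ)*x*y^3 + (-3387/625 : ℂ)*I*y + (228/3125 : ℂ)*I*y^3 + (-32/1953125 : ℂ)*I*y^5 + (-6 : ℂ)*I*x + (48/625 : ℂ)*I*x*y^2) * h + ((27/25 : ℂ)*y^2 + (-27/125 : ℂ)*y^4 + (216/390625 : ℂ)*y^6 + (18/5 : ℂ)*x*y + (-144/125 : ℂ)*x*y^3 + (144/78125 : ℂ)*x*y^5 + (3 : ℂ)*x^2 + (-42/25 : ℂ)*x^2*y^2 + (24/15625 : ℂ)*x^2*y^4 + (1 : ℂ)*x^4 + (27/25 : ℂ)*I*y^3 + (-216/15625 : ℂ)*I*y^5 + (27/5 : ℂ)*I*x*y^2 + (-216/3125 : ℂ)*I*x*y^4 + (9 : ℂ)*I*x^2*y + (-72/625 : ℂ)*I*x^2*y^3 + (5 : ℂ)*I*x^3 + (-8/125 : ℂ)*I*x^3*y^2 + (81/625 : ℂ)*I^2*y^4 +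 (108/125 : ℂ)*I^2*x*y^3 + (54/25 : ℂ)*I^2*x^2*y^2 + (12/5 : ℂ)*I^2*x^3*y + (1 : ℂ)*I^2*x^4) * hI

lemma gen2 (x y t : ℂ) (h : x*y = 1)
    (ht : t = I*(x + (3/5)*y) - (2/125)*y^2) :
    (4*t^3 + 15*t^2 + (4*x^2+6)*t + 5*x^2 + 6) * y^2
    = -10 + (6/5)*I*y + (-1484/125)*y^2 + (-6/5)*I*y^3 + (-3291/625)*y^4
      + (-17952/15625)*I*y^5 + (228/3125)*y^6 + (144/78125)*I*y^7
      + (-32/1953125)*y^8 := by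
  have hI : (I:ℂ)^2 = -1 := Complex.I_sq
  subst ht
  linear_combination ((-10 : ℂ) + (-2234/125 : ℂ)*y^2 + (144/625 : ℂ)*y^4 + (-10 : ℂ)*x*y + (16/125 : ℂ)*x*y^3 + (6/5 : ℂ)*I*y + (-24/5 : ℂ)*I*y^3 + (48/15625 : ℂ)*I*y^5 + (-24/5 : ℂ)*I*x*y^2) * h + ((27/5 : ℂ)*y^4 + (-216/3125 : ℂ)*y^6 + (18 : ℂ)*x*y^3 + (-144/625 : ℂ)*x*y^5 + (15 : ℂ)*x^2*y^2 + (-24/125 : ℂ)*x^2*y^4 + (108/125 : ℂ)*I*y^5 + (108/25 : ℂ)*I*x*y^4 + (36/5 : ℂ)*I*x^2*y^3 + (4 : ℂ)*I*x^3*y^2) * hI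

lemma gen3 (x y t : ℂ) (h : x*y = 1)
    (ht : t = I*(x + (3/5)*y) - (2/125)*y^2) :
    (6*t^2 + 15*t + 2*x^2 + 3) * y^2
    = -4 + 15*I*y + (-21/5)*y^2 + (1101/125)*I*y^3 + (-12/5)*y^4
      + (-72/625)*I*y^5 + (24/15625)*y^6 := by
  have hI : (I:ℂ)^2 = -1 := Complex.I_sq
  subst ht
  linear_combination ((-4 : ℂ) + (-36/5 : ℂ)*y^2 + (-4 : ℂ)*x*y + (15 : ℂ)*I*y + (-24/125 : ℂ)*I*y^3) * h + ((54/25 : ℂ)*y^4 + (36/5 : ℂ)*x*y^3 + (6 : ℂ)*x^2*y^2) * hI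

lemma tt_eq (ν : ℝ) (hν : (ν:ℂ) ≠ 0) :
    tt ν = I*((ν:ℂ) + (3/5)*((ν:ℂ))⁻¹) - (2/125)*((ν:ℂ))⁻¹^2 := by
  unfold tt
  field_simp

lemma tendsto_inv_c : Tendsto (fun ν : ℝ => ((ν:ℂ))⁻¹) atTop (nhds 0) := by
  have h : Tendsto (fun ν : ℝ => ((ν⁻¹ : ℝ) : ℂ)) atTop (nhds ((0:ℝ):ℂ)) :=
    (Complex.continuous_ofReal.tendsto 0).comp tendsto_inv_atTop_zero
  simp only [Complex.ofReal_inv, Complex.ofReal_zero] at h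
  exact h

lemma L1 : Tendsto (fun ν : ℝ => Qf (tt ν) ν) atTop (nhds 0) := by
  have hcont : Continuous (fun y : ℂ => (-1137/625)*I*y + (-391/15625)*y^2 + (-3327/3125)*I*y^3
      + (16791/78125)*y^4 + (31468/1953125)*I*y^5 + (-224/390625)*y^6
      + (-96/9765625)*I*y^7 + (16/244140625)*y^8) := by continuity
  have h0 : Tendsto ((fun y : ℂ => (-1137/625)*I*y + (-391/15625)*y^2 + (-3327/3125)*I*y^3
      + (16791/78125)*y^4 + (31468/1953125)*I*y^5 + (-224/390625)*y^6
      + (-96/9765625)*I*y^7 + (16/244140625)*y^8) ∘ (fun ν : ℝ => ((ν:ℂ))⁻¹)) atTop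
      (nhds ((-1137/625)*I*(0:ℂ) + (-391/15625)*(0:ℂ)^2 + (-3327/3125)*I*(0:ℂ)^3
      + (16791/78125)*(0:ℂ)^4 + (31468/1953125)*I*(0:ℂ)^5 + (-224/390625)*(0:ℂ)^6
      + (-96/9765625)*I*(0:ℂ)^7 + (16/244140625)*(0:ℂ)^8)) :=
    (hcont.tendsto 0).comp tendsto_inv_c
  rw [show (-1137/625)*I*(0:ℂ) + (-391/15625)*(0:ℂ)^2 + (-3327/3125)*I*(0:ℂ)^3
      + (16791/78125)*(0:ℂ)^4 + (31468/1953125)*I*(0:ℂ)^5 + (-224/390625)*(0:ℂ)^6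
      + (-96/9765625)*I*(0:ℂ)^7 + (16/244140625)*(0:ℂ)^8 = (0:ℂ) by norm_num] at h0
  apply Tendsto.congr' _ h0
  filter_upwards [eventually_ge_atTop (1:ℝ)] with ν hν
  have hν0 : (ν:ℂ) ≠ 0 := by
    simp only [ne_eq, Complex.ofReal_eq_zero]; linarith
  have h := gen1 (ν:ℂ) ((ν:ℂ))⁻¹ (tt ν) (mul_inv_cancel₀ hν0) (tt_eq ν hν0)
  show _ = Qf (tt ν) ν
  unfold Qf
  exact h.symm

lemma L2 : Tendsto (fun ν : ℝ =>
    (4*(tt ν)^3 + 15*(tt ν)^2 + (4*(ν:ℂ)^2+6)*(tt ν) + 5*(ν:ℂ)^2 + 6) * ((ν:ℂ))⁻¹^2)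
    atTop (nhds (-10)) := by
  have hcont : Continuous (fun y : ℂ => -10 + (6/5)*I*y + (-1484/125)*y^2 + (-6/5)*I*y^3
      + (-3291/625)*y^4 + (-17952/15625)*I*y^5 + (228/3125)*y^6 + (144/78125)*I*y^7
      + (-32/1953125)*y^8) := by continuity
  have h0 : Tendsto ((fun y : ℂ => -10 + (6/5)*I*y + (-1484/125)*y^2 + (-6/5)*I*y^3
      + (-3291/625)*y^4 + (-17952/15625)*I*y^5 + (228/3125)*y^6 + (144/78125)*I*y^7
      + (-32/1953125)*y^8) ∘ (fun ν : ℝ => ((ν:ℂ))⁻¹)) atTop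
      (nhds ((-10:ℂ) + (6/5)*I*0 + (-1484/125)*(0:ℂ)^2 + (-6/5)*I*(0:ℂ)^3
      + (-3291/625)*(0:ℂ)^4 + (-17952/15625)*I*(0:ℂ)^5 + (228/3125)*(0:ℂ)^6
      + (144/78125)*I*(0:ℂ)^7 + (-32/1953125)*(0:ℂ)^8)) :=
    (hcont.tendsto 0).comp tendsto_inv_c
  rw [show (-10:ℂ) + (6/5)*I*0 + (-1484/125)*(0:ℂ)^2 + (-6/5)*I*(0:ℂ)^3
      + (-3291/625)*(0:ℂ)^4 + (-17952/15625)*I*(0:ℂ)^5 + (228/3125)*(0:ℂ)^6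
      + (144/78125)*I*(0:ℂ)^7 + (-32/1953125)*(0:ℂ)^8 = (-10:ℂ) by norm_num] at h0
  apply Tendsto.congr' _ h0
  filter_upwards [eventually_ge_atTop (1:ℝ)] with ν hν
  have hν0 : (ν:ℂ) ≠ 0 := by
    simp only [ne_eq, Complex.ofReal_eq_zero]; linarith
  exact (gen2 (ν:ℂ) ((ν:ℂ))⁻¹ (tt ν) (mul_inv_cancel₀ hν0) (tt_eq ν hν0)).symm

lemma L3 : Tendsto (fun ν : ℝ =>
    (6*(tt ν)^2 + 15*(tt ν) + 2*(ν:ℂ)^2 + 3) * ((ν:ℂ))⁻¹^2)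
    atTop (nhds (-4)) := by
  have hcont : Continuous (fun y : ℂ => -4 + 15*I*y + (-21/5)*y^2 + (1101/125)*I*y^3
      + (-12/5)*y^4 + (-72/625)*I*y^5 + (24/15625)*y^6) := by continuity
  have h0 : Tendsto ((fun y : ℂ => -4 + 15*I*y + (-21/5)*y^2 + (1101/125)*I*y^3
      + (-12/5)*y^4 + (-72/625)*I*y^5 + (24/15625)*y^6) ∘ (fun ν : ℝ => ((ν:ℂ))⁻¹)) atTop
      (nhds ((-4:ℂ) + 15*I*0 + (-21/5)*(0:ℂ)^2 + (1101/125)*I*(0:ℂ)^3 + (-12/5)*(0:ℂ)^4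
      + (-72/625)*I*(0:ℂ)^5 + (24/15625)*(0:ℂ)^6)) :=
    (hcont.tendsto 0).comp tendsto_inv_c
  rw [show (-4:ℂ) + 15*I*0 + (-21/5)*(0:ℂ)^2 + (1101/125)*I*(0:ℂ)^3 + (-12/5)*(0:ℂ)^4
      + (-72/625)*I*(0:ℂ)^5 + (24/15625)*(0:ℂ)^6 = (-4:ℂ) by norm_num] at h0
  apply Tendsto.congr' _ h0
  filter_upwards [eventually_ge_atTop (1:ℝ)] with ν hν
  have hν0 : (ν:ℂ) ≠ 0 := by
    simp only [ne_eq, Complex.ofReal_eq_zero]; linarith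
  exact (gen3 (ν:ℂ) ((ν:ℂ))⁻¹ (tt ν) (mul_inv_cancel₀ hν0) (tt_eq ν hν0)).symm

lemma exists_min4 (a b c d : ℝ) :
    ∃ m, (m = a ∨ m = b ∨ m = c ∨ m = d) ∧ m ≤ a ∧ m ≤ b ∧ m ≤ c ∧ m ≤ d := by
  refine ⟨min (min a b) (min c d), ?_, ?_, ?_, ?_, ?_⟩
  · rcases min_choice (min a b) (min c d) with h | h
    · rcases min_choice a b with h' | h'
      · left; rw [h, h']
      · right; left; rw [h, h']
    · rcases min_choice c d with h' | h'
      · right; right; left; rw [h, h']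
      · right; right; right; rw [h, h']
  · exact (min_le_left _ _).trans (min_le_left _ _)
  · exact (min_le_left _ _).trans (min_le_right _ _)
  · exact (min_le_right _ _).trans (min_le_left _ _)
  · exact (min_le_right _ _).trans (min_le_right _ _)

lemma norm_add4_le (A B C D : ℂ) : ‖A+B+C+D‖ ≤ ‖A‖+‖B‖+‖C‖+‖D‖ := by
  calc ‖A+B+C+D‖ ≤ ‖A+B+C‖ + ‖D‖ := norm_add_le _ _
  _ ≤ ‖A+B‖ + ‖C‖ + ‖D‖ := by have := norm_add_le (A+B) C; linarith
  _ ≤ ‖A‖+‖B‖+‖C‖+‖D‖ := by have := norm_add_le A B; linarith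

lemma norm_add6_le (A B C D E F : ℂ) :
    ‖A+B+C+D+E+F‖ ≤ ‖A‖+‖B‖+‖C‖+‖D‖+‖E‖+‖F‖ := by
  calc ‖A+B+C+D+E+F‖ ≤ ‖A+B+C+D+E‖ + ‖F‖ := norm_add_le _ _
  _ ≤ ‖A+B+C+D‖ + ‖E‖ + ‖F‖ := by have := norm_add_le (A+B+C+D) E; linarith
  _ ≤ ‖A‖+‖B‖+‖C‖+‖D‖+‖E‖+‖F‖ := by have := norm_add4_le A B C D; linarith

lemma tt_norm (ν : ℝ) (hν : 1 ≤ ν) : ‖tt ν‖ ≤ ν + 2 := by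
  have hν0 : ν ≠ 0 := by linarith
  have heq : tt ν = Complex.I*((ν + 3/(5*ν) : ℝ) : ℂ) - ((2/(125*ν^2) : ℝ) : ℂ) := by
    unfold tt; push_cast; ring
  have h1 : (0:ℝ) ≤ ν + 3/(5*ν) := by positivity
  have h2 : (0:ℝ) ≤ 2/(125*ν^2) := by positivity
  have h3 : 3/(5*ν) ≤ 1 := by
    rw [div_le_one (by linarith : (0:ℝ) < 5*ν)]; linarith
  have h4 : 2/(125*ν^2) ≤ 1 := by
    rw [div_le_one (by nlinarith : (0:ℝ) < 125*ν^2)]; nlinarith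
  calc ‖tt ν‖ ≤ ‖Complex.I*((ν + 3/(5*ν) : ℝ) : ℂ)‖ + ‖((2/(125*ν^2) : ℝ) : ℂ)‖ := by
        rw [heq]; exact norm_sub_le _ _
  _ = |ν + 3/(5*ν)| + |2/(125*ν^2)| := by
        rw [norm_mul, Complex.norm_I, one_mul, Complex.norm_real, Complex.norm_real,
          Real.norm_eq_abs, Real.norm_eq_abs]
  _ = (ν + 3/(5*ν)) + 2/(125*ν^2) := by
        rw [_root_.abs_of_nonneg h1, _root_.abs_of_nonneg h2]
  _ ≤ ν + 2 := by linarith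

lemma key (ν : ℝ) (hν : 100 ≤ ν)
    (hQ16 : ‖Qf (tt ν) ν‖ ≤ 1/16)
    (hP1 : (19/2)*ν^2 ≤ ‖4*(tt ν)^3 + 15*(tt ν)^2 + (4*(ν:ℂ)^2+6)*(tt ν) + 5*(ν:ℂ)^2 + 6‖)
    (hH : (7/2)*ν^2 ≤ ‖6*(tt ν)^2 + 15*(tt ν) + 2*(ν:ℂ)^2 + 3‖) :
    ∃ b : ℂ, Qf b ν = 0 ∧ ν^2 * ‖b - tt ν‖ ≤ 32 * ‖Qf (tt ν) ν‖ := by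
  have hν1 : (1:ℝ) ≤ ν := by linarith
  obtain ⟨r0, r1, r2, r3, hf⟩ :=
    exists_four_roots 5 (2*(ν:ℂ)^2+3) (5*(ν:ℂ)^2+6) ((ν:ℂ)^4+3*(ν:ℂ)^2+2)
  have hfQ : ∀ z : ℂ, Qf z ν = (z - r0)*(z - r1)*(z - r2)*(z - r3) := by
    intro z; unfold Qf; linear_combination hf z
  have hr0 : Qf r0 ν = 0 := by rw [hfQ r0]; ring
  have hr1 : Qf r1 ν = 0 := by rw [hfQ r1]; ring
  have hr2 : Qf r2 ν = 0 := by rw [hfQ r2]; ring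
  have hr3 : Qf r3 ν = 0 := by rw [hfQ r3]; ring
  have rb : ∀ r : ℂ, Qf r ν = 0 → ‖r‖ ≤ ν + 13 := by
    intro r hr
    refine root_bound ν hν1 r ?_
    unfold Qf at hr; exact hr
  have httn := tt_norm ν hν1
  have hub : ∀ r : ℂ, Qf r ν = 0 → ‖tt ν - r‖ ≤ 2*ν+15 := by
    intro r hr
    calc ‖tt ν - r‖ ≤ ‖tt ν‖ + ‖r‖ := norm_sub_le _ _
    _ ≤ (ν+2) + (ν+13) := add_le_add httn (rb r hr)
    _ = 2*ν+15 := by ring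
  set δ0 := ‖tt ν - r0‖ with hδ0d
  set δ1 := ‖tt ν - r1‖ with hδ1d
  set δ2 := ‖tt ν - r2‖ with hδ2d
  set δ3 := ‖tt ν - r3‖ with hδ3d
  have hE' : ‖Qf (tt ν) ν‖ = δ0*δ1*δ2*δ3 := by
    rw [hfQ (tt ν), norm_mul, norm_mul, norm_mul]
  have hA : (19/2)*ν^2 ≤ δ1*δ2*δ3 + δ0*δ2*δ3 + δ0*δ1*δ3 + δ0*δ1*δ2 := by
    have hs := sum_triples 5 (2*(ν:ℂ)^2+3) (5*(ν:ℂ)^2+6) ((ν:ℂ)^4+3*(ν:ℂ)^2+2)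
      r0 r1 r2 r3 hf (tt ν)
    calc (19/2)*ν^2
        ≤ ‖4*(tt ν)^3 + 15*(tt ν)^2 + (4*(ν:ℂ)^2+6)*(tt ν) + 5*(ν:ℂ)^2 + 6‖ := hP1
    _ = ‖(tt ν - r1)*(tt ν - r2)*(tt ν - r3) + (tt ν - r0)*(tt ν - r2)*(tt ν - r3)
        + (tt ν - r0)*(tt ν - r1)*(tt ν - r3) + (tt ν - r0)*(tt ν - r1)*(tt ν - r2)‖ := by
        congr 1; linear_combination hs
    _ ≤ ‖(tt ν - r1)*(tt ν - r2)*(tt ν - r3)‖ + ‖(tt ν - r0)*(tt ν - r2)*(tt ν - r3)‖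
        + ‖(tt ν - r0)*(tt ν - r1)*(tt ν - r3)‖ + ‖(tt ν - r0)*(tt ν - r1)*(tt ν - r2)‖ :=
        norm_add4_le _ _ _ _
    _ = δ1*δ2*δ3 + δ0*δ2*δ3 + δ0*δ1*δ3 + δ0*δ1*δ2 := by
        rw [norm_mul, norm_mul, norm_mul, norm_mul, norm_mul, norm_mul, norm_mul, norm_mul]
  have hB : (7/2)*ν^2 ≤ δ0*δ1 + δ0*δ2 + δ0*δ3 + δ1*δ2 + δ1*δ3 + δ2*δ3 := by
    have hs := sum_pairs 5 (2*(ν:ℂ)^2+3) (5*(ν:ℂ)^2+6) ((ν:ℂ)^4+3*(ν:ℂ)^2+2)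
      r0 r1 r2 r3 hf (tt ν)
    calc (7/2)*ν^2 ≤ ‖6*(tt ν)^2 + 15*(tt ν) + 2*(ν:ℂ)^2 + 3‖ := hH
    _ = ‖(tt ν - r0)*(tt ν - r1) + (tt ν - r0)*(tt ν - r2) + (tt ν - r0)*(tt ν - r3)
        + (tt ν - r1)*(tt ν - r2) + (tt ν - r1)*(tt ν - r3) + (tt ν - r2)*(tt ν - r3)‖ := by
        congr 1; linear_combination hs
    _ ≤ ‖(tt ν - r0)*(tt ν - r1)‖ + ‖(tt ν - r0)*(tt ν - r2)‖ + ‖(tt ν - r0)*(tt ν - r3)‖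
        + ‖(tt ν - r1)*(tt ν - r2)‖ + ‖(tt ν - r1)*(tt ν - r3)‖ + ‖(tt ν - r2)*(tt ν - r3)‖ :=
        norm_add6_le _ _ _ _ _ _
    _ = δ0*δ1 + δ0*δ2 + δ0*δ3 + δ1*δ2 + δ1*δ3 + δ2*δ3 := by
        rw [norm_mul, norm_mul, norm_mul, norm_mul, norm_mul, norm_mul]
  obtain ⟨m, hmeq, hm0, hm1, hm2, hm3⟩ := exists_min4 δ0 δ1 δ2 δ3
  have h0n : (0:ℝ) ≤ δ0 := norm_nonneg _
  have h1n : (0:ℝ) ≤ δ1 := norm_nonneg _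
  have h2n : (0:ℝ) ≤ δ2 := norm_nonneg _
  have h3n : (0:ℝ) ≤ δ3 := norm_nonneg _
  have hub0 : δ0 ≤ 2*ν+15 := hub r0 hr0
  have hub1 : δ1 ≤ 2*ν+15 := hub r1 hr1
  have hub2 : δ2 ≤ 2*ν+15 := hub r2 hr2
  have hub3 : δ3 ≤ 2*ν+15 := hub r3 hr3
  rcases hmeq with h | h | h | h
  · refine ⟨r0, hr0, ?_⟩
    rw [norm_sub_rev]
    exact pure_bound ν δ0 δ1 δ2 δ3 (‖Qf (tt ν) ν‖) hν h0n h1n h2n h3n hub1 hub2 hub3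
      (h ▸ hm1) (h ▸ hm2) (h ▸ hm3) hE'.symm hQ16 hA hB
  · refine ⟨r1, hr1, ?_⟩
    rw [norm_sub_rev]
    exact pure_bound ν δ1 δ0 δ2 δ3 (‖Qf (tt ν) ν‖) hν h1n h0n h2n h3n hub0 hub2 hub3
      (h ▸ hm0) (h ▸ hm2) (h ▸ hm3) (by rw [hE']; ring) hQ16
      (hA.trans_eq (by ring)) (hB.trans_eq (by ring))
  · refine ⟨r2, hr2, ?_⟩
    rw [norm_sub_rev]
    exact pure_bound ν δ2 δ0 δ1 δ3 (‖Qf (tt ν) ν‖) hν h2n h0n h1n h3n hub0 hub1 hub3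
      (h ▸ hm0) (h ▸ hm1) (h ▸ hm3) (by rw [hE']; ring) hQ16
      (hA.trans_eq (by ring)) (hB.trans_eq (by ring))
  · refine ⟨r3, hr3, ?_⟩
    rw [norm_sub_rev]
    exact pure_bound ν δ3 δ0 δ1 δ2 (‖Qf (tt ν) ν‖) hν h3n h0n h1n h2n hub0 hub1 hub2
      (h ▸ hm0) (h ▸ hm1) (h ▸ hm2) (by rw [hE']; ring) hQ16
      (hA.trans_eq (by ring)) (hB.trans_eq (by ring))

theorem stmt11 :
    ∃ ν₀ : ℝ, 0 < ν₀ ∧ ∃ β : ℝ → ℂ,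
      (∀ ν : ℝ, ν₀ ≤ ν →
        ((β ν) ^ 2 + (ν : ℂ) ^ 2 + 1 + β ν) *
            ((β ν) ^ 2 + (ν : ℂ) ^ 2 + 2 + 4 * β ν) - 4 * (β ν) ^ 2 = 0) ∧
      Tendsto (fun ν : ℝ =>
          (ν : ℂ) ^ 2 *
            (β ν - Complex.I * ((ν : ℂ) + 3 / (5 * (ν : ℂ))) + 2 / (125 * (ν : ℂ) ^ 2)))
        atTop (nhds 0) := by
  classical
  have hL1n : Tendsto (fun ν : ℝ => ‖Qf (tt ν) ν‖) atTop (nhds 0) := by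
    simpa using L1.norm
  have hL2n : Tendsto (fun ν : ℝ =>
      ‖(4*(tt ν)^3 + 15*(tt ν)^2 + (4*(ν:ℂ)^2+6)*(tt ν) + 5*(ν:ℂ)^2 + 6) * ((ν:ℂ))⁻¹^2‖)
      atTop (nhds 10) := by
    have := L2.norm
    rw [show ‖(-10:ℂ)‖ = 10 by norm_num] at this
    exact this
  have hL3n : Tendsto (fun ν : ℝ =>
      ‖(6*(tt ν)^2 + 15*(tt ν) + 2*(ν:ℂ)^2 + 3) * ((ν:ℂ))⁻¹^2‖)
      atTop (nhds 4) := by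
    have := L3.norm
    rw [show ‖(-4:ℂ)‖ = 4 by norm_num] at this
    exact this
  have hev : ∀ᶠ ν : ℝ in atTop, 100 ≤ ν ∧ ‖Qf (tt ν) ν‖ ≤ 1/16
      ∧ (19/2)*ν^2 ≤ ‖4*(tt ν)^3 + 15*(tt ν)^2 + (4*(ν:ℂ)^2+6)*(tt ν) + 5*(ν:ℂ)^2 + 6‖
      ∧ (7/2)*ν^2 ≤ ‖6*(tt ν)^2 + 15*(tt ν) + 2*(ν:ℂ)^2 + 3‖ := by
    filter_upwards [eventually_ge_atTop (100:ℝ),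
      hL1n.eventually_lt_const (by norm_num : (0:ℝ) < 1/16),
      hL2n.eventually_const_lt (by norm_num : (19/2:ℝ) < 10),
      hL3n.eventually_const_lt (by norm_num : (7/2:ℝ) < 4)] with ν h100 h16 hlt2 hlt3
    have hνpos : (0:ℝ) < ν := by linarith
    have hnn : ‖((ν:ℂ))⁻¹^2‖ = (ν^2)⁻¹ := by
      rw [norm_pow, norm_inv, Complex.norm_real, Real.norm_eq_abs,
        _root_.abs_of_nonneg hνpos.le, inv_pow]
    refine ⟨h100, h16.le, ?_, ?_⟩
    · rw [norm_mul, hnn] at hlt2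
      have hpos : (0:ℝ) < ν^2 := by positivity
      rw [show ‖4*(tt ν)^3 + 15*(tt ν)^2 + (4*(ν:ℂ)^2+6)*(tt ν) + 5*(ν:ℂ)^2 + 6‖ * (ν^2)⁻¹
          = ‖4*(tt ν)^3 + 15*(tt ν)^2 + (4*(ν:ℂ)^2+6)*(tt ν) + 5*(ν:ℂ)^2 + 6‖ / ν^2
          from by ring] at hlt2
      rw [lt_div_iff₀ hpos] at hlt2
      linarith
    · rw [norm_mul, hnn] at hlt3
      have hpos : (0:ℝ) < ν^2 := by positivity
      rw [show ‖6*(tt ν)^2 + 15*(tt ν) + 2*(ν:ℂ)^2 + 3‖ * (ν^2)⁻¹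
          = ‖6*(tt ν)^2 + 15*(tt ν) + 2*(ν:ℂ)^2 + 3‖ / ν^2 from by ring] at hlt3
      rw [lt_div_iff₀ hpos] at hlt3
      linarith
  obtain ⟨N, hN⟩ := eventually_atTop.mp hev
  have hex : ∀ ν : ℝ, max N 100 ≤ ν →
      ∃ b : ℂ, Qf b ν = 0 ∧ ν^2 * ‖b - tt ν‖ ≤ 32 * ‖Qf (tt ν) ν‖ := by
    intro ν hg
    obtain ⟨h100, h16, h2, h3⟩ := hN ν ((le_max_left N 100).trans hg)
    exact key ν h100 h16 h2 h3
  refine ⟨max N 100, lt_of_lt_of_le (by norm_num) (le_max_right N 100),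
    fun ν => if h : ∃ b : ℂ, Qf b ν = 0 ∧ ν^2 * ‖b - tt ν‖ ≤ 32 * ‖Qf (tt ν) ν‖
      then h.choose else 0, ?_, ?_⟩
  · intro ν hg
    have h := hex ν hg
    simp only [dif_pos h]
    have h1 := h.choose_spec.1
    unfold Qf at h1
    exact h1
  · apply squeeze_zero_norm' ?_ (by simpa using hL1n.const_mul (32:ℝ))
    filter_upwards [eventually_ge_atTop (max N 100)] with ν hg
    have h := hex ν hg
    have h100 : (100:ℝ) ≤ ν := (le_max_right N 100).trans hg
    simp only [dif_pos h]
    have h2 := h.choose_spec.2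
    have hinner : h.choose - Complex.I * ((ν : ℂ) + 3 / (5 * (ν : ℂ)))
        + 2 / (125 * (ν : ℂ) ^ 2) = h.choose - tt ν := by
      unfold tt; ring
    rw [hinner, norm_mul]
    have hn2 : ‖((ν:ℂ))^2‖ = ν^2 := by
      rw [norm_pow, Complex.norm_real, Real.norm_eq_abs, _root_.sq_abs]
    rw [hn2]
    exact h2

end
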